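/- Let F be a field of characteristic 2 satisfying conditions Π_k and Π_{n−k}, where k is odd and n is even. If A is a k×(n−k) matrix over F such that the block matrix (I_k | A) is not an LCED matrix, then the sum of the entries on every row of A equals 1 and the sum of the entries on every column of A equals 1. -/

import Mathlib

open Matrix

/-- The permutation matrix of `σ`: the `(i, j)` entry is `1` if `σ j = i` and `0` otherwise. -/
def permMat (F : Type*) [Zero F] [One F] {n : Type*} [DecidableEq n]
    (σ : Equiv.Perm n) : Matrix n n F :=
  Matrix.of fun i j => if σ j = i then 1 else 0

/-- A matrix `G` over a field is an LCED matrix if there is a permutation matrix `P`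
such that `G * P * Gᵀ` is invertible. -/
def IsLCEDMatrix {F : Type*} [Field F] {k n : Type*} [Fintype k] [Fintype n]
    [DecidableEq k] [DecidableEq n] (G : Matrix k n F) : Prop :=
  ∃ σ : Equiv.Perm n, IsUnit (G * permMat F σ * Gᵀ)

/-- A field `F` satisfies condition `Π_k` if every symmetric `k × k` matrix `M` such that
`-1` is an eigenvalue of `P * M` for every permutation matrix `P` has the sum of all of
its entries equal to `-k`. -/
def PiCond (F : Type*) [Field F] (k : ℕ) : Prop :=
  ∀ M : Matrix (Fin k) (Fin k) F, M.IsSymm →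
    (∀ σ : Equiv.Perm (Fin k), ((1 : Matrix (Fin k) (Fin k) F) + permMat F σ * M).det = 0) →
    ∑ i, ∑ j, M i j = -(k : F)

section Aux

variable {F : Type*} [Field F]

lemma permMat_mul' {n : Type*} [DecidableEq n] [Fintype n] (σ τ : Equiv.Perm n) :
    permMat F σ * permMat F τ = permMat F (σ * τ) := by
  ext i j
  simp [permMat, mul_apply, ite_and, Finset.sum_ite_eq', Equiv.Perm.mul_apply, eq_comm]

lemma permMat_one' {n : Type*} [DecidableEq n] [Fintype n] :
    permMat F (1 : Equiv.Perm n) = 1 := by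
  ext i j
  simp [permMat, Matrix.one_apply, eq_comm]

lemma permMat_isUnit' {n : Type*} [DecidableEq n] [Fintype n] (σ : Equiv.Perm n) :
    IsUnit (permMat F σ) :=
  ⟨⟨permMat F σ, permMat F σ⁻¹,
    by rw [permMat_mul', mul_inv_cancel, permMat_one'],
    by rw [permMat_mul', inv_mul_cancel, permMat_one']⟩, rfl⟩

lemma permMat_transpose' {n : Type*} [DecidableEq n] [Fintype n] (σ : Equiv.Perm n) :
    (permMat F σ)ᵀ = permMat F σ⁻¹ := by
  ext i j
  simp only [transpose_apply, permMat, of_apply]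
  congr 1
  simp [eq_comm, Equiv.eq_symm_apply, Equiv.Perm.inv_def]

lemma entrySum' {k m : ℕ} (A : Matrix (Fin k) (Fin m) F) (σ : Equiv.Perm (Fin m)) :
    ∑ i, ∑ i', (A * permMat F σ * Aᵀ) i i'
      = ∑ j, (∑ i, A i (σ j)) * (∑ i, A i j) := by
  have hAP : ∀ i j', (A * permMat F σ) i j' = A i (σ j') := by
    intro i j'
    simp [mul_apply, permMat, mul_ite, Finset.sum_ite_eq']
  have h1 : ∀ i i', (A * permMat F σ * Aᵀ) i i' = ∑ j, A i (σ j) * A i' j := by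
    intro i i'
    rw [mul_apply]; simp [hAP]
  simp only [h1, Finset.sum_mul, Finset.mul_sum]
  trans ∑ i' : Fin k, ∑ i : Fin k, ∑ j : Fin m, A i (σ j) * A i' j
  · exact Finset.sum_comm
  trans ∑ i' : Fin k, ∑ j : Fin m, ∑ i : Fin k, A i (σ j) * A i' j
  · exact Finset.sum_congr rfl fun i' _ => Finset.sum_comm
  exact Finset.sum_comm

lemma colSum_one {k m : ℕ} (hk1 : (k : F) = 1) (hm1 : (m : F) = 1) (h2 : (2 : F) = 0)
    (hPik : PiCond F k) (A : Matrix (Fin k) (Fin m) F)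
    (hdet : ∀ (σ₁ : Equiv.Perm (Fin k)) (σ₂ : Equiv.Perm (Fin m)),
      ((1 : Matrix (Fin k) (Fin k) F) + permMat F σ₁ * (A * permMat F σ₂ * Aᵀ)).det = 0) :
    ∀ j, ∑ i, A i j = 1 := by
  set c : Fin m → F := fun j => ∑ i, A i j with hc
  have hneg1 : -(1 : F) = 1 := by linear_combination -h2
  have hsum : ∀ σ₂ : Equiv.Perm (Fin m), σ₂⁻¹ = σ₂ →
      ∑ j, c (σ₂ j) * c j = 1 := by
    intro σ₂ hσ
    have hsymm : (A * permMat F σ₂ * Aᵀ).IsSymm := by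
      unfold Matrix.IsSymm
      rw [transpose_mul, transpose_mul, transpose_transpose, permMat_transpose', hσ,
        Matrix.mul_assoc]
    have hh := hPik _ hsymm (fun σ₁ => hdet σ₁ σ₂)
    rw [entrySum', hk1, hneg1] at hh
    exact hh
  have hid := hsum 1 (by simp)
  simp only [Equiv.Perm.one_apply] at hid
  have hall : ∀ a b : Fin m, c a = c b := by
    intro a b
    by_cases hab : a = b
    · rw [hab]
    have hswap := hsum (Equiv.swap a b) (Equiv.swap_inv a b)
    have hdiff : ∑ j, (c (Equiv.swap a b j) * c j - c j * c j) = 0 := by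
      rw [Finset.sum_sub_distrib, hswap, hid]
      ring
    have hpair : ∑ j ∈ ({a, b} : Finset (Fin m)),
        (c (Equiv.swap a b j) * c j - c j * c j) = 0 := by
      rw [← hdiff]
      refine Finset.sum_subset (Finset.subset_univ _) (fun x _ hx => ?_)
      have hxa : x ≠ a ∧ x ≠ b := by simpa [not_or] using hx
      rw [Equiv.swap_apply_of_ne_of_ne hxa.1 hxa.2]
      ring
    rw [Finset.sum_pair hab] at hpair
    simp only [Equiv.swap_apply_left, Equiv.swap_apply_right] at hpair
    have hsq : (c a - c b) ^ 2 = 0 := by linear_combination -hpair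
    have := pow_eq_zero_iff (two_ne_zero) |>.mp hsq
    exact sub_eq_zero.mp this
  intro j
  have hmj : (m : F) * (c j * c j) = 1 := by
    calc (m : F) * (c j * c j) = ∑ _j' : Fin m, c j * c j := by
          rw [Finset.sum_const, Finset.card_univ, Fintype.card_fin, nsmul_eq_mul]
      _ = ∑ j', c j' * c j' := Finset.sum_congr rfl fun j' _ => by rw [hall j j']
      _ = 1 := hid
  rw [hm1, one_mul] at hmj
  have hsq : (c j - 1) ^ 2 = 0 := by linear_combination hmj + (1 - c j) * h2
  exact sub_eq_zero.mp (pow_eq_zero_iff two_ne_zero |>.mp hsq)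

end Aux

/-- in characteristic 2, with `k` odd and `n = k + (n-k)` even, if `F`
satisfies `Π_k` and `Π_{n-k}` and `(I_k | A)` is not an LCED matrix, then every row and
every column of `A` sums to `1`. -/
theorem stmt12 {F : Type*} [Field F] [CharP F 2] {k m : ℕ} (hk : Odd k)
    (hn : Even (k + m)) (hPik : PiCond F k) (hPim : PiCond F m)
    (A : Matrix (Fin k) (Fin m) F)
    (h : ¬ IsLCEDMatrix (fromCols (1 : Matrix (Fin k) (Fin k) F) A)) :
    (∀ i, ∑ j, A i j = 1) ∧ (∀ j, ∑ i, A i j = 1) := by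
  have h2 : (2 : F) = 0 := by exact_mod_cast CharP.cast_eq_zero F 2
  have hm : Odd m := by
    rcases Nat.even_or_odd m with he | ho
    · exact absurd (hk.add_even he) (by simpa using Nat.not_odd_iff_even.mpr hn)
    · exact ho
  have hk1 : (k : F) = 1 := by
    obtain ⟨t, rfl⟩ := hk; push_cast; rw [h2]; ring
  have hm1 : (m : F) = 1 := by
    obtain ⟨t, rfl⟩ := hm; push_cast; rw [h2]; ring
  set G := fromCols (1 : Matrix (Fin k) (Fin k) F) A with hG
  have hdet0 : ∀ σ : Equiv.Perm (Fin k ⊕ Fin m), (G * permMat F σ * Gᵀ).det = 0 := by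
    intro σ
    by_contra hne
    exact h ⟨σ, (Matrix.isUnit_iff_isUnit_det _).mpr (isUnit_iff_ne_zero.mpr hne)⟩
  have hblock : ∀ (σ₁ : Equiv.Perm (Fin k)) (σ₂ : Equiv.Perm (Fin m)),
      permMat F (Equiv.sumCongr σ₁ σ₂)
        = fromBlocks (permMat F σ₁) 0 0 (permMat F σ₂) := by
    intro σ₁ σ₂
    ext (i | i) (j | j) <;> simp [permMat, fromBlocks]
  have hprod : ∀ (σ₁ : Equiv.Perm (Fin k)) (σ₂ : Equiv.Perm (Fin m)),
      G * permMat F (Equiv.sumCongr σ₁ σ₂) * Gᵀ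
        = permMat F σ₁ + A * permMat F σ₂ * Aᵀ := by
    intro σ₁ σ₂
    rw [hG, hblock, transpose_fromCols, transpose_one, fromCols_mul_fromBlocks,
      fromCols_mul_fromRows]
    simp [Matrix.mul_assoc]
  have hdetkey : ∀ (σ₁ : Equiv.Perm (Fin k)) (σ₂ : Equiv.Perm (Fin m)),
      ((1 : Matrix (Fin k) (Fin k) F) + permMat F σ₁ * (A * permMat F σ₂ * Aᵀ)).det = 0 := by
    intro σ₁ σ₂
    have h0 := hdet0 (Equiv.sumCongr σ₁⁻¹ σ₂)
    rw [hprod] at h0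
    have hfac : permMat F σ₁⁻¹ + A * permMat F σ₂ * Aᵀ
        = permMat F σ₁⁻¹ * (1 + permMat F σ₁ * (A * permMat F σ₂ * Aᵀ)) := by
      rw [Matrix.mul_add, Matrix.mul_one, ← Matrix.mul_assoc, permMat_mul',
        inv_mul_cancel, permMat_one', Matrix.one_mul]
    rw [hfac, det_mul] at h0
    rcases mul_eq_zero.mp h0 with h' | h'
    · exact absurd h'
        (((Matrix.isUnit_iff_isUnit_det _).mp (permMat_isUnit' σ₁⁻¹)).ne_zero)
    · exact h'
  have hdetkey' : ∀ (τ : Equiv.Perm (Fin m)) (ρ : Equiv.Perm (Fin k)),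
      ((1 : Matrix (Fin m) (Fin m) F) + permMat F τ * (Aᵀ * permMat F ρ * A)).det = 0 := by
    intro τ ρ
    have h0 := hdetkey ρ τ
    simp only [← Matrix.mul_assoc] at h0
    rw [det_one_add_mul_comm] at h0
    simp only [← Matrix.mul_assoc] at h0
    rw [det_one_add_mul_comm] at h0
    simp only [← Matrix.mul_assoc] at h0 ⊢
    exact h0
  constructor
  · intro i
    have := colSum_one hm1 hk1 h2 hPim Aᵀ hdetkey' i
    simpa using this
  · exact colSum_one hk1 hm1 h2 hPik A hdetkey
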